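/- arXiv:0809.5110 — 3 statements merged into one kernel-verified Lean document; each statement's English description precedes it below -/
import Mathlib

section
/- With the transported shuffle product ш and coefficient function C as above, for positive integers k ≥ 2 and n ≥ k+1: ∑_{r ≥ 1, s1 ≥ 2, s2,...,s_{k-1} ≥ 1, r+s1+...+s_{k-1}=n} z_r ш z_{s1,...,s_{k-1}} = ∑_{ti ≥ 1, ∑ti = n} [C(t1,...,t_{k-1}) − C(t2,...,t_{k-1})] z_{t1,...,tk} − ∑_{ti ≥ 1, t2 = 1, ∑ti = n} z_{t1,...,tk}, with the convention C(∅) = 1 when k = 2. -/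
open Finsupp

/-- The free ℤ-module on words in the two letters `x₀, x₁`
(`false` plays the role of `x₀` and `true` the role of `x₁`). -/
abbrev XWords : Type := (List Bool) →₀ ℤ

/-- The free ℤ-module on words `z_{s₁,…,s_k}` (a word is the list of its indices). -/
abbrev QWords : Type := (List ℕ) →₀ ℤ

/-- A word in `x₀, x₁` as a basis element. -/
noncomputable def xw (l : List Bool) : XWords := Finsupp.single l 1

/-- The word `z_{s₁,…,s_k}` as a basis element. -/
noncomputable def zw (l : List ℕ) : QWords := Finsupp.single l 1

/-- The bijection `z_{s₁,…,s_k} ↔ x₀^{s₁-1} x₁ ⋯ x₀^{s_k-1} x₁` on words. -/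
def encodeWord : List ℕ → List Bool
  | [] => []
  | s :: t => List.replicate (s - 1) false ++ true :: encodeWord t

/-- The coefficient `C(t₁,…,t_m) = ∑_{j=1}^{m} 2^{(t₁+⋯+t_j)-j} + 2^{(t₁+⋯+t_m)-m}`,
with `C` of the empty tuple equal to `1`. -/
def Ccoef (t : List ℕ) : ℤ :=
  (∑ j ∈ Finset.range t.length, 2 ^ ((t.take (j + 1)).sum - (j + 1)))
    + 2 ^ (t.sum - t.length)

/-! ### compositions as lists -/

def comps : ℕ → ℕ → Finset (List ℕ)
  | N, 0 => if N = 0 then {[]} else ∅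
  | N, (m+1) => (Finset.Icc 1 N).biUnion fun i => ((comps (N - i) m).image (i :: ·))

lemma mem_comps {N m : ℕ} {l : List ℕ} :
    l ∈ comps N m ↔ l.length = m ∧ l.sum = N ∧ ∀ x ∈ l, 1 ≤ x := by
  induction m generalizing N l with
  | zero =>
    simp only [comps]
    split <;> rename_i h
    · subst h
      simp only [Finset.mem_singleton, List.length_eq_zero_iff]
      constructor
      · rintro rfl; simp
      · rintro ⟨rfl, _, _⟩; rfl
    · simp only [Finset.notMem_empty, false_iff, List.length_eq_zero_iff, not_and]
      rintro rfl h2; simp at h2; omega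
  | succ m ih =>
    simp only [comps, Finset.mem_biUnion, Finset.mem_Icc, Finset.mem_image]
    constructor
    · rintro ⟨i, ⟨hi1, hi2⟩, s, hs, rfl⟩
      rw [ih] at hs
      obtain ⟨h1, h2, h3⟩ := hs
      refine ⟨by simp [h1], by simp [h2]; omega, ?_⟩
      intro x hx; rcases List.mem_cons.1 hx with rfl | hx
      · exact hi1
      · exact h3 x hx
    · rintro ⟨h1, h2, h3⟩
      match l with
      | [] => simp at h1
      | a :: s =>
        have ha : 1 ≤ a := h3 a (by simp)
        have hs : ∀ x ∈ s, 1 ≤ x := fun x hx => h3 x (by simp [hx])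
        simp at h2
        refine ⟨a, ⟨ha, by omega⟩, s, ?_, rfl⟩
        rw [ih]
        exact ⟨by simpa using h1, by omega, hs⟩

lemma length_le_sum_of_pos {l : List ℕ} (h : ∀ x ∈ l, 1 ≤ x) : l.length ≤ l.sum := by
  induction l with
  | nil => simp
  | cons a t ih =>
    simp only [List.length_cons, List.sum_cons]
    have := h a (by simp)
    have := ih (fun x hx => h x (by simp [hx]))
    omega

lemma comps_eq_empty {N m : ℕ} (h : N < m) : comps N m = ∅ := by
  ext l
  simp only [mem_comps, Finset.notMem_empty, iff_false]
  rintro ⟨h1, h2, h3⟩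
  have := length_le_sum_of_pos h3
  omega

lemma comps_zero_succ (m : ℕ) : comps 0 (m+1) = ∅ := comps_eq_empty (by omega)

lemma comps_succ_one (N : ℕ) : comps (N+1) 1 = {[N+1]} := by
  ext l
  simp only [mem_comps, Finset.mem_singleton]
  constructor
  · rintro ⟨h1, h2, h3⟩
    match l with
    | [a] => simp at h2; simp [h2]
  · rintro rfl
    exact ⟨rfl, rfl, by intro x hx; simp at hx; omega⟩

lemma cons_headI_tail {l : List ℕ} (h : l ≠ []) : l.headI :: l.tail = l := by
  cases l with
  | nil => simp at h
  | cons a t => rfl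

lemma ne_nil_of_mem_comps {N m : ℕ} {l : List ℕ} (h : l ∈ comps N (m+1)) : l ≠ [] := by
  rw [mem_comps] at h
  intro hl; rw [hl] at h; simp at h


variable {M : Type*} [AddCommMonoid M]

lemma filter_headI_one (N m : ℕ) :
    (comps (N+1) (m+1)).filter (fun l => l.headI = 1) = (comps N m).image (1 :: ·) := by
  ext l
  simp only [Finset.mem_filter, Finset.mem_image, mem_comps]
  constructor
  · rintro ⟨⟨h1, h2, h3⟩, h4⟩
    match l with
    | [] => simp at h1
    | a :: t =>
      simp only [List.headI] at h4
      subst h4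
      simp only [List.sum_cons] at h2
      exact ⟨t, ⟨by simpa using h1, by omega, fun x hx => h3 x (by simp [hx])⟩, rfl⟩
  · rintro ⟨s, ⟨h1, h2, h3⟩, rfl⟩
    refine ⟨⟨by simp [h1], by simp only [List.sum_cons, h2]; omega, ?_⟩, rfl⟩
    intro x hx
    rcases List.mem_cons.1 hx with rfl | hx
    · omega
    · exact h3 x hx

lemma filter_headI_ne_one (N m : ℕ) :
    (comps (N+1) (m+1)).filter (fun l => ¬ l.headI = 1)
      = (comps N (m+1)).image (fun l => (l.headI + 1) :: l.tail) := by
  ext l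
  simp only [Finset.mem_filter, Finset.mem_image, mem_comps]
  constructor
  · rintro ⟨⟨h1, h2, h3⟩, h4⟩
    match l with
    | [] => simp at h1
    | a :: t =>
      simp only [List.headI] at h4
      have ha : 1 ≤ a := h3 a (by simp)
      have ha2 : 2 ≤ a := by omega
      simp only [List.sum_cons] at h2
      refine ⟨(a-1) :: t, ⟨by simpa using h1, by simp; omega, ?_⟩, ?_⟩
      · intro x hx
        rcases List.mem_cons.1 hx with rfl | hx
        · omega
        · exact h3 x (by simp [hx])
      · simp only [List.headI, List.tail_cons]
        congr 1
        omega
  · rintro ⟨s, ⟨h1, h2, h3⟩, rfl⟩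
    have hne : s ≠ [] := by intro h; rw [h] at h1; simp at h1
    have hs : s.headI :: s.tail = s := cons_headI_tail hne
    refine ⟨⟨?_, ?_, ?_⟩, ?_⟩
    · have : (s.headI :: s.tail).length = s.length := by rw [hs]
      simp at this ⊢; omega
    · have : (s.headI :: s.tail).sum = s.sum := by rw [hs]
      simp at this ⊢; omega
    · intro x hx
      rcases List.mem_cons.1 hx with rfl | hx
      · omega
      · exact h3 x (by rw [← hs]; simp [hx])
    · have : 1 ≤ s.headI := h3 _ (by rw [← hs]; simp)
      simp
      omega

lemma sum_comps_split (N m : ℕ) (f : List ℕ → M) :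
    ∑ l ∈ comps (N+1) (m+1), f l
      = (∑ s ∈ comps N m, f (1 :: s)) + ∑ l ∈ comps N (m+1), f ((l.headI + 1) :: l.tail) := by
  rw [← Finset.sum_filter_add_sum_filter_not (comps (N+1) (m+1)) (fun l => l.headI = 1) f]
  congr 1
  · rw [filter_headI_one, Finset.sum_image]
    intro x _ y _ h
    simpa using h
  · rw [filter_headI_ne_one, Finset.sum_image]
    intro x hx y hy h
    simp only [List.cons.injEq] at h
    rw [← cons_headI_tail (ne_nil_of_mem_comps hx), ← cons_headI_tail (ne_nil_of_mem_comps hy),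
      h.2]
    congr 1
    omega

lemma filter_tail_headI_one (N m : ℕ) :
    (comps (N+1) (m+2)).filter (fun l => l.tail.headI = 1)
      = (comps N (m+1)).image (fun l => l.headI :: 1 :: l.tail) := by
  ext l
  simp only [Finset.mem_filter, Finset.mem_image, mem_comps]
  constructor
  · rintro ⟨⟨h1, h2, h3⟩, h4⟩
    match l with
    | [] => simp at h1
    | [a] => simp at h1
    | a :: b :: t =>
      simp only [List.tail_cons, List.headI] at h4
      subst h4
      simp only [List.sum_cons] at h2
      refine ⟨a :: t, ⟨by simpa using h1, by simp; omega, ?_⟩, rfl⟩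
      intro x hx
      rcases List.mem_cons.1 hx with rfl | hx
      · exact h3 x (by simp)
      · exact h3 x (by simp [hx])
  · rintro ⟨s, ⟨h1, h2, h3⟩, rfl⟩
    have hne : s ≠ [] := by intro h; rw [h] at h1; simp at h1
    have hs : s.headI :: s.tail = s := cons_headI_tail hne
    constructor
    · refine ⟨?_, ?_, ?_⟩
      · have : (s.headI :: s.tail).length = s.length := by rw [hs]
        simp at this ⊢; omega
      · have : (s.headI :: s.tail).sum = s.sum := by rw [hs]
        simp at this ⊢; omega
      · intro x hx
        rcases List.mem_cons.1 hx with rfl | hx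
        · exact h3 _ (by rw [← hs]; simp)
        · rcases List.mem_cons.1 hx with rfl | hx
          · omega
          · exact h3 x (by rw [← hs]; simp [hx])
    · simp

lemma filter_tail_headI_ne_one (N m : ℕ) :
    (comps (N+1) (m+2)).filter (fun l => ¬ l.tail.headI = 1)
      = (comps N (m+2)).image (fun l => l.headI :: (l.tail.headI + 1) :: l.tail.tail) := by
  ext l
  simp only [Finset.mem_filter, Finset.mem_image, mem_comps]
  constructor
  · rintro ⟨⟨h1, h2, h3⟩, h4⟩
    match l with
    | [] => simp at h1
    | [a] => simp at h1
    | a :: b :: t =>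
      simp only [List.tail_cons, List.headI] at h4
      have hb : 1 ≤ b := h3 b (by simp)
      have hb2 : 2 ≤ b := by omega
      simp only [List.sum_cons] at h2
      refine ⟨a :: (b-1) :: t, ⟨by simpa using h1, by simp; omega, ?_⟩, ?_⟩
      · intro x hx
        rcases List.mem_cons.1 hx with rfl | hx
        · exact h3 x (by simp)
        · rcases List.mem_cons.1 hx with rfl | hx
          · omega
          · exact h3 x (by simp [hx])
      · simp only [List.headI, List.tail_cons]
        congr 2
        omega
  · rintro ⟨s, ⟨h1, h2, h3⟩, rfl⟩
    obtain ⟨a, b, t, rfl⟩ : ∃ a b t, s = a :: b :: t := by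
      match s, h1 with | a :: b :: t, _ => exact ⟨a, b, t, rfl⟩
    simp only [List.headI, List.tail_cons]
    have hb : 1 ≤ b := h3 b (by simp)
    constructor
    · refine ⟨by simpa using h1, by simp at h2 ⊢; omega, ?_⟩
      intro x hx
      rcases List.mem_cons.1 hx with rfl | hx
      · exact h3 x (by simp)
      · rcases List.mem_cons.1 hx with rfl | hx
        · omega
        · exact h3 x (by simp [hx])
    · omega

lemma sum_comps_filter_tail_one (N m : ℕ) (f : List ℕ → M) :
    ∑ l ∈ (comps (N+1) (m+2)).filter (fun l => l.tail.headI = 1), f l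
      = ∑ l ∈ comps N (m+1), f (l.headI :: 1 :: l.tail) := by
  rw [filter_tail_headI_one, Finset.sum_image]
  intro x hx y hy h
  simp only [List.cons.injEq] at h
  rw [← cons_headI_tail (ne_nil_of_mem_comps hx), ← cons_headI_tail (ne_nil_of_mem_comps hy),
    h.1, h.2.2]

lemma two_le_length_of_mem_comps {N m : ℕ} {l : List ℕ} (h : l ∈ comps N (m+2)) :
    l.headI :: l.tail.headI :: l.tail.tail = l := by
  rw [mem_comps] at h
  match l, h.1 with
  | a :: b :: t, _ => rfl

lemma sum_comps_split2 (N m : ℕ) (f : List ℕ → M) :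
    ∑ l ∈ comps (N+1) (m+2), f l
      = (∑ l ∈ comps N (m+1), f (l.headI :: 1 :: l.tail))
        + ∑ l ∈ comps N (m+2), f (l.headI :: (l.tail.headI + 1) :: l.tail.tail) := by
  rw [← Finset.sum_filter_add_sum_filter_not (comps (N+1) (m+2)) (fun l => l.tail.headI = 1) f]
  congr 1
  · exact sum_comps_filter_tail_one N m f
  · rw [filter_tail_headI_ne_one, Finset.sum_image]
    intro x hx y hy h
    simp only [List.cons.injEq] at h
    rw [← two_le_length_of_mem_comps hx, ← two_le_length_of_mem_comps hy, h.1, h.2.2]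
    congr 2
    omega

/-! ### concrete shuffle -/

noncomputable def shf : List Bool → List Bool → XWords
  | [], v => xw v
  | (a :: u), [] => xw (a :: u)
  | (a :: u), (b :: v) =>
      Finsupp.mapDomain (List.cons a) (shf u (b :: v))
        + Finsupp.mapDomain (List.cons b) (shf (a :: u) v)
termination_by u v => u.length + v.length

lemma shf_nil_left (v : List Bool) : shf [] v = xw v := by cases v <;> rw [shf]

lemma shf_nil_right (u : List Bool) : shf u [] = xw u := by cases u <;> rw [shf]

lemma shf_cons_cons (a b : Bool) (u v : List Bool) :
    shf (a :: u) (b :: v)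
      = Finsupp.mapDomain (List.cons a) (shf u (b :: v))
        + Finsupp.mapDomain (List.cons b) (shf (a :: u) v) := by
  rw [shf]

/-! ### encode lemmas -/

lemma encode_nil : encodeWord [] = [] := rfl

lemma encode_cons_one (t : List ℕ) : encodeWord (1 :: t) = true :: encodeWord t := rfl

lemma encode_cons_succ {h : ℕ} (hh : 1 ≤ h) (t : List ℕ) :
    encodeWord ((h + 1) :: t) = false :: encodeWord (h :: t) := by
  show List.replicate (h + 1 - 1) false ++ true :: encodeWord t
    = false :: (List.replicate (h - 1) false ++ true :: encodeWord t)
  have : h + 1 - 1 = (h - 1) + 1 := by omega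
  rw [this, List.replicate_succ]
  simp

lemma encode_one : encodeWord [1] = [true] := rfl

lemma encode_singleton_succ {p : ℕ} (hp : 1 ≤ p) :
    encodeWord [p + 1] = false :: encodeWord [p] := encode_cons_succ hp []

/-! ### mapDomain helpers -/

lemma mapDomain_sum_over {α β : Type*} {ι : Type*} (f : α → β) (s : Finset ι)
    (g : ι → (α →₀ ℤ)) :
    Finsupp.mapDomain f (∑ i ∈ s, g i) = ∑ i ∈ s, Finsupp.mapDomain f (g i) :=
  map_sum (Finsupp.mapDomain.addMonoidHom f) g s

lemma mapDomain_zsmul {α β : Type*} (f : α → β) (c : ℤ) (x : α →₀ ℤ) :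
    Finsupp.mapDomain f (c • x) = c • Finsupp.mapDomain f x := by
  rw [← Finsupp.lmapDomain_apply ℤ ℤ, ← Finsupp.lmapDomain_apply ℤ ℤ, map_smul]

lemma mapDomain_cons_xw (a : Bool) (l : List Bool) :
    Finsupp.mapDomain (List.cons a) (xw l) = xw (a :: l) := by
  unfold xw
  rw [Finsupp.mapDomain_single]

lemma mapDomain_encode_zw (l : List ℕ) :
    Finsupp.mapDomain encodeWord (zw l) = xw (encodeWord l) := by
  unfold zw xw
  rw [Finsupp.mapDomain_single]

/-! ### pointwise shuffle expansion lemmas -/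

lemma shf_S1 (s : List ℕ) :
    shf (encodeWord [1]) (encodeWord (1 :: s))
      = Finsupp.mapDomain (List.cons true) (xw (encodeWord (1 :: s)))
        + Finsupp.mapDomain (List.cons true) (shf (encodeWord [1]) (encodeWord s)) := by
  rw [encode_one, encode_cons_one, shf_cons_cons, shf_nil_left, ← encode_cons_one]

lemma shf_S2 {p : ℕ} (hp : 1 ≤ p) (s : List ℕ) :
    shf (encodeWord [p + 1]) (encodeWord (1 :: s))
      = Finsupp.mapDomain (List.cons false) (shf (encodeWord [p]) (encodeWord (1 :: s)))
        + Finsupp.mapDomain (List.cons true) (shf (encodeWord [p + 1]) (encodeWord s)) := by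
  rw [encode_singleton_succ hp, encode_cons_one, shf_cons_cons, ← encode_cons_one,
    ← encode_singleton_succ hp]

lemma shf_S3 {h : ℕ} (hh : 1 ≤ h) (t : List ℕ) :
    shf (encodeWord [1]) (encodeWord ((h + 1) :: t))
      = Finsupp.mapDomain (List.cons true) (xw (encodeWord ((h + 1) :: t)))
        + Finsupp.mapDomain (List.cons false) (shf (encodeWord [1]) (encodeWord (h :: t))) := by
  rw [encode_one, encode_cons_succ hh, shf_cons_cons, shf_nil_left, ← encode_cons_succ hh]

lemma shf_S4 {p h : ℕ} (hp : 1 ≤ p) (hh : 1 ≤ h) (t : List ℕ) :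
    shf (encodeWord [p + 1]) (encodeWord ((h + 1) :: t))
      = Finsupp.mapDomain (List.cons false) (shf (encodeWord [p]) (encodeWord ((h + 1) :: t)))
        + Finsupp.mapDomain (List.cons false)
            (shf (encodeWord [p + 1]) (encodeWord (h :: t))) := by
  rw [encode_singleton_succ hp, encode_cons_succ hh, shf_cons_cons, ← encode_cons_succ hh,
    ← encode_singleton_succ hp]

/-! ### Ccoef lemmas -/

lemma Ccoef_nil : Ccoef [] = 1 := by simp [Ccoef]

lemma Ccoef_cons_one (u : List ℕ) : Ccoef (1 :: u) = 1 + Ccoef u := by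
  unfold Ccoef
  rw [List.length_cons, Finset.sum_range_succ']
  simp only [List.take_succ_cons, List.sum_cons, List.take_zero, List.sum_nil, List.length_cons]
  have h1 : ∀ j, 1 + (u.take (j + 1)).sum - (j + 1 + 1) = (u.take (j + 1)).sum - (j + 1) := by
    intro j; omega
  have h2 : 1 + u.sum - (u.length + 1) = u.sum - u.length := by omega
  simp only [h1, h2]
  push_cast
  ring

lemma sum_take_ge {u : List ℕ} (hu : ∀ x ∈ u, 1 ≤ x) {j : ℕ} (hj : j ≤ u.length) :
    j ≤ (u.take j).sum := by
  have h1 : ∀ x ∈ u.take j, 1 ≤ x := fun x hx => hu x (List.take_subset j u hx)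
  have := length_le_sum_of_pos h1
  rwa [List.length_take, min_eq_left hj] at this

lemma Ccoef_cons_succ {h : ℕ} (hh : 1 ≤ h) {u : List ℕ} (hu : ∀ x ∈ u, 1 ≤ x) :
    Ccoef ((h + 1) :: u) = 2 * Ccoef (h :: u) := by
  unfold Ccoef
  rw [mul_add, Finset.mul_sum]
  congr 1
  · apply Finset.sum_congr rfl
    intro j hj
    simp only [Finset.mem_range, List.length_cons] at hj
    simp only [List.take_succ_cons, List.sum_cons]
    have hts : j ≤ (u.take j).sum := sum_take_ge hu (by omega)
    have e1 : h + 1 + (u.take j).sum - (j + 1) = (h + (u.take j).sum - (j + 1)) + 1 := by omega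
    rw [e1, pow_succ]
    ring
  · simp only [List.sum_cons, List.length_cons]
    have := length_le_sum_of_pos hu
    have e1 : h + 1 + u.sum - (u.length + 1) = (h + u.sum - (u.length + 1)) + 1 := by omega
    rw [e1, pow_succ]
    ring

/-! ### the five sums -/

noncomputable def Hsum (N m : ℕ) : XWords :=
  ∑ l ∈ comps N (m+1), shf (encodeWord [l.headI]) (encodeWord l.tail)

noncomputable def XWs (N m : ℕ) : XWords := ∑ l ∈ comps N m, xw (encodeWord l)

noncomputable def Rsum (N m : ℕ) : XWords :=
  ∑ l ∈ comps N (m+1), Ccoef (l.take m) • xw (encodeWord l)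

lemma headI_pos_of_mem_comps {N m : ℕ} {l : List ℕ} (h : l ∈ comps N (m+1)) : 1 ≤ l.headI := by
  rw [mem_comps] at h
  obtain ⟨h1, _, h3⟩ := h
  match l, h1 with
  | a :: t, _ => exact h3 a (by simp)

lemma tail_headI_pos_of_mem_comps {N m : ℕ} {l : List ℕ} (h : l ∈ comps N (m+2)) :
    1 ≤ l.tail.headI := by
  rw [mem_comps] at h
  obtain ⟨h1, _, h3⟩ := h
  match l, h1 with
  | a :: b :: t, _ => exact h3 b (by simp)

lemma tail_cons_of_mem_comps {N m : ℕ} {l : List ℕ} (h : l ∈ comps N (m+2)) :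
    l.tail.headI :: l.tail.tail = l.tail := by
  rw [mem_comps] at h
  obtain ⟨h1, _, _⟩ := h
  match l, h1 with
  | a :: b :: t, _ => rfl

/-! ### recursion for Hsum -/

lemma Hrec (n m : ℕ) :
    Hsum (n+1) (m+1)
      = Finsupp.mapDomain (List.cons false) (Hsum n (m+1) + Hsum n (m+1))
        + Finsupp.mapDomain (List.cons true) (Hsum n m + XWs n (m+1)) := by
  cases n with
  | zero =>
    have h1 : comps 1 (m+2) = ∅ := comps_eq_empty (by omega)
    simp [Hsum, XWs, h1, comps_zero_succ]
  | succ n₀ =>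
    have e0 : Hsum (n₀+1+1) (m+1)
        = (∑ l ∈ comps (n₀+1) (m+1), shf (encodeWord [l.headI]) (encodeWord (1 :: l.tail)))
          + ∑ l ∈ comps (n₀+1) (m+2),
              shf (encodeWord [l.headI]) (encodeWord ((l.tail.headI + 1) :: l.tail.tail)) :=
      sum_comps_split2 (n₀+1) m _
    have eA : (∑ l ∈ comps (n₀+1) (m+1), shf (encodeWord [l.headI]) (encodeWord (1 :: l.tail)))
        = (∑ s ∈ comps n₀ m, shf (encodeWord [1]) (encodeWord (1 :: s)))
          + ∑ l ∈ comps n₀ (m+1), shf (encodeWord [l.headI + 1]) (encodeWord (1 :: l.tail)) :=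
      sum_comps_split n₀ m _
    have eB : (∑ l ∈ comps (n₀+1) (m+2),
          shf (encodeWord [l.headI]) (encodeWord ((l.tail.headI + 1) :: l.tail.tail)))
        = (∑ s ∈ comps n₀ (m+1), shf (encodeWord [1]) (encodeWord ((s.headI + 1) :: s.tail)))
          + ∑ l ∈ comps n₀ (m+2),
              shf (encodeWord [l.headI + 1]) (encodeWord ((l.tail.headI + 1) :: l.tail.tail)) :=
      sum_comps_split n₀ (m+1) _
    have eA1 : (∑ s ∈ comps n₀ m, shf (encodeWord [1]) (encodeWord (1 :: s)))
        = ∑ s ∈ comps n₀ m,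
            (Finsupp.mapDomain (List.cons true) (xw (encodeWord (1 :: s)))
              + Finsupp.mapDomain (List.cons true) (shf (encodeWord [1]) (encodeWord s))) :=
      Finset.sum_congr rfl fun s _ => shf_S1 s
    have eA2 : (∑ l ∈ comps n₀ (m+1), shf (encodeWord [l.headI + 1]) (encodeWord (1 :: l.tail)))
        = ∑ l ∈ comps n₀ (m+1),
            (Finsupp.mapDomain (List.cons false)
                (shf (encodeWord [l.headI]) (encodeWord (1 :: l.tail)))
              + Finsupp.mapDomain (List.cons true)
                (shf (encodeWord [l.headI + 1]) (encodeWord l.tail))) :=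
      Finset.sum_congr rfl fun l hl => shf_S2 (headI_pos_of_mem_comps hl) l.tail
    have eB1 : (∑ s ∈ comps n₀ (m+1), shf (encodeWord [1]) (encodeWord ((s.headI + 1) :: s.tail)))
        = ∑ s ∈ comps n₀ (m+1),
            (Finsupp.mapDomain (List.cons true) (xw (encodeWord ((s.headI + 1) :: s.tail)))
              + Finsupp.mapDomain (List.cons false)
                (shf (encodeWord [1]) (encodeWord s))) :=
      Finset.sum_congr rfl fun s hs => by
        rw [shf_S3 (headI_pos_of_mem_comps hs), cons_headI_tail (ne_nil_of_mem_comps hs)]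
    have eB2 : (∑ l ∈ comps n₀ (m+2),
          shf (encodeWord [l.headI + 1]) (encodeWord ((l.tail.headI + 1) :: l.tail.tail)))
        = ∑ l ∈ comps n₀ (m+2),
            (Finsupp.mapDomain (List.cons false)
                (shf (encodeWord [l.headI]) (encodeWord ((l.tail.headI + 1) :: l.tail.tail)))
              + Finsupp.mapDomain (List.cons false)
                (shf (encodeWord [l.headI + 1]) (encodeWord l.tail))) :=
      Finset.sum_congr rfl fun l hl => by
        rw [shf_S4 (headI_pos_of_mem_comps hl) (tail_headI_pos_of_mem_comps hl),
          tail_cons_of_mem_comps hl]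
    have rF1 : Hsum (n₀+1) (m+1)
        = (∑ l ∈ comps n₀ (m+1), shf (encodeWord [l.headI]) (encodeWord (1 :: l.tail)))
          + ∑ l ∈ comps n₀ (m+2),
              shf (encodeWord [l.headI]) (encodeWord ((l.tail.headI + 1) :: l.tail.tail)) :=
      sum_comps_split2 n₀ m _
    have rF2 : Hsum (n₀+1) (m+1)
        = (∑ s ∈ comps n₀ (m+1), shf (encodeWord [1]) (encodeWord s))
          + ∑ l ∈ comps n₀ (m+2), shf (encodeWord [l.headI + 1]) (encodeWord l.tail) :=
      sum_comps_split n₀ (m+1) _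
    have rT1 : Hsum (n₀+1) m
        = (∑ s ∈ comps n₀ m, shf (encodeWord [1]) (encodeWord s))
          + ∑ l ∈ comps n₀ (m+1), shf (encodeWord [l.headI + 1]) (encodeWord l.tail) :=
      sum_comps_split n₀ m _
    have rT2 : XWs (n₀+1) (m+1)
        = (∑ s ∈ comps n₀ m, xw (encodeWord (1 :: s)))
          + ∑ l ∈ comps n₀ (m+1), xw (encodeWord ((l.headI + 1) :: l.tail)) :=
      sum_comps_split n₀ m _
    rw [e0, eA, eB, eA1, eA2, eB1, eB2]
    nth_rewrite 1 [rF1]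
    rw [rF2, rT1, rT2]
    simp only [Finset.sum_add_distrib, Finsupp.mapDomain_add, mapDomain_sum_over]
    abel

lemma pos_of_mem_comps {N m : ℕ} {l : List ℕ} (h : l ∈ comps N m) : ∀ x ∈ l, 1 ≤ x :=
  (mem_comps.1 h).2.2

lemma take_from_headI_tail {l : List ℕ} (hne : l ≠ []) (m : ℕ) :
    l.headI :: l.tail.take m = l.take (m+1) := by
  conv_rhs => rw [← cons_headI_tail hne]
  rw [List.take_succ_cons]

lemma Rrec (n m : ℕ) :
    Rsum (n+1) (m+1)
      = Finsupp.mapDomain (List.cons false) (Rsum n (m+1) + Rsum n (m+1))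
        + Finsupp.mapDomain (List.cons true) (Rsum n m + XWs n (m+1)) := by
  have e0 : Rsum (n+1) (m+1)
      = (∑ s ∈ comps n (m+1), Ccoef ((1 :: s).take (m+1)) • xw (encodeWord (1 :: s)))
        + ∑ l ∈ comps n (m+2),
            Ccoef (((l.headI + 1) :: l.tail).take (m+1))
              • xw (encodeWord ((l.headI + 1) :: l.tail)) :=
    sum_comps_split n (m+1) _
  have e1 : (∑ s ∈ comps n (m+1), Ccoef ((1 :: s).take (m+1)) • xw (encodeWord (1 :: s)))
      = ∑ s ∈ comps n (m+1),
          (Finsupp.mapDomain (List.cons true) (xw (encodeWord s))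
            + Finsupp.mapDomain (List.cons true) (Ccoef (s.take m) • xw (encodeWord s))) := by
    refine Finset.sum_congr rfl fun s _ => ?_
    rw [List.take_succ_cons, Ccoef_cons_one, encode_cons_one, ← mapDomain_cons_xw,
      add_smul, one_smul, mapDomain_zsmul]
  have e2 : (∑ l ∈ comps n (m+2),
        Ccoef (((l.headI + 1) :: l.tail).take (m+1))
          • xw (encodeWord ((l.headI + 1) :: l.tail)))
      = ∑ l ∈ comps n (m+2),
          (Finsupp.mapDomain (List.cons false) (Ccoef (l.take (m+1)) • xw (encodeWord l))
            + Finsupp.mapDomain (List.cons false)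
                (Ccoef (l.take (m+1)) • xw (encodeWord l))) := by
    refine Finset.sum_congr rfl fun l hl => ?_
    have hne := ne_nil_of_mem_comps hl
    have hpos : ∀ x ∈ l.tail.take m, 1 ≤ x := fun x hx =>
      pos_of_mem_comps hl x (List.tail_subset l (List.take_subset m l.tail hx))
    have hh := headI_pos_of_mem_comps hl
    rw [List.take_succ_cons, Ccoef_cons_succ hh hpos, take_from_headI_tail hne,
      encode_cons_succ hh, cons_headI_tail hne, ← mapDomain_cons_xw, two_mul, add_smul,
      mapDomain_zsmul]
  rw [e0, e1, e2]
  simp only [Rsum, XWs, Finset.sum_add_distrib, Finsupp.mapDomain_add, mapDomain_sum_over]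
  abel

lemma H_eq_R (N m : ℕ) : Hsum N m = Rsum N m := by
  induction N generalizing m with
  | zero => simp [Hsum, Rsum, comps_zero_succ]
  | succ N ih =>
    cases m with
    | zero =>
      simp [Hsum, Rsum, comps_succ_one, encode_nil, shf_nil_right, Ccoef_nil]
    | succ m => rw [Hrec, Rrec, ih, ih]

/-! ### the `t₂ = 1` sums -/

noncomputable def R2sum (N m : ℕ) : XWords :=
  ∑ l ∈ comps N (m+2), Ccoef (l.tail.take m) • xw (encodeWord l)

noncomputable def Esum (N m : ℕ) : XWords :=
  ∑ l ∈ comps N (m+1), shf (encodeWord [l.headI]) (encodeWord (1 :: l.tail))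

noncomputable def Wsum (N m : ℕ) : XWords :=
  ∑ l ∈ comps N (m+1), xw (encodeWord (l.headI :: 1 :: l.tail))

noncomputable def XW1 (N m : ℕ) : XWords := ∑ s ∈ comps N m, xw (encodeWord (1 :: s))

lemma Erec (N m : ℕ) :
    Esum (N+1) m
      = Finsupp.mapDomain (List.cons false) (Esum N m)
        + Finsupp.mapDomain (List.cons true) (Hsum (N+1) m + XW1 N m) := by
  have e0 : Esum (N+1) m
      = (∑ s ∈ comps N m, shf (encodeWord [1]) (encodeWord (1 :: s)))
        + ∑ l ∈ comps N (m+1), shf (encodeWord [l.headI + 1]) (encodeWord (1 :: l.tail)) :=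
    sum_comps_split N m _
  have e1 : (∑ s ∈ comps N m, shf (encodeWord [1]) (encodeWord (1 :: s)))
      = ∑ s ∈ comps N m,
          (Finsupp.mapDomain (List.cons true) (xw (encodeWord (1 :: s)))
            + Finsupp.mapDomain (List.cons true) (shf (encodeWord [1]) (encodeWord s))) :=
    Finset.sum_congr rfl fun s _ => shf_S1 s
  have e2 : (∑ l ∈ comps N (m+1), shf (encodeWord [l.headI + 1]) (encodeWord (1 :: l.tail)))
      = ∑ l ∈ comps N (m+1),
          (Finsupp.mapDomain (List.cons false)
              (shf (encodeWord [l.headI]) (encodeWord (1 :: l.tail)))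
            + Finsupp.mapDomain (List.cons true)
              (shf (encodeWord [l.headI + 1]) (encodeWord l.tail))) :=
    Finset.sum_congr rfl fun l hl => shf_S2 (headI_pos_of_mem_comps hl) l.tail
  have rT : Hsum (N+1) m
      = (∑ s ∈ comps N m, shf (encodeWord [1]) (encodeWord s))
        + ∑ l ∈ comps N (m+1), shf (encodeWord [l.headI + 1]) (encodeWord l.tail) :=
    sum_comps_split N m _
  rw [e0, e1, e2, rT]
  simp only [Finset.sum_add_distrib, Finsupp.mapDomain_add, mapDomain_sum_over, Esum, XW1]
  abel

lemma R2rec (N m : ℕ) :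
    R2sum (N+2) m
      = Finsupp.mapDomain (List.cons false) (R2sum (N+1) m)
        + Finsupp.mapDomain (List.cons true) (Rsum (N+1) m) := by
  have e0 : R2sum (N+2) m
      = (∑ s ∈ comps (N+1) (m+1), Ccoef ((1 :: s).tail.take m) • xw (encodeWord (1 :: s)))
        + ∑ l ∈ comps (N+1) (m+2),
            Ccoef (((l.headI + 1) :: l.tail).tail.take m)
              • xw (encodeWord ((l.headI + 1) :: l.tail)) :=
    sum_comps_split (N+1) (m+1) _
  have e1 : (∑ s ∈ comps (N+1) (m+1), Ccoef ((1 :: s).tail.take m) • xw (encodeWord (1 :: s)))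
      = ∑ s ∈ comps (N+1) (m+1),
          Finsupp.mapDomain (List.cons true) (Ccoef (s.take m) • xw (encodeWord s)) := by
    refine Finset.sum_congr rfl fun s _ => ?_
    rw [List.tail_cons, encode_cons_one, ← mapDomain_cons_xw, mapDomain_zsmul]
  have e2 : (∑ l ∈ comps (N+1) (m+2),
        Ccoef (((l.headI + 1) :: l.tail).tail.take m)
          • xw (encodeWord ((l.headI + 1) :: l.tail)))
      = ∑ l ∈ comps (N+1) (m+2),
          Finsupp.mapDomain (List.cons false) (Ccoef (l.tail.take m) • xw (encodeWord l)) := by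
    refine Finset.sum_congr rfl fun l hl => ?_
    have hne := ne_nil_of_mem_comps hl
    have hh := headI_pos_of_mem_comps hl
    rw [List.tail_cons, encode_cons_succ hh, cons_headI_tail hne, ← mapDomain_cons_xw,
      mapDomain_zsmul]
  rw [e0, e1, e2]
  simp only [mapDomain_sum_over, R2sum, Rsum]
  abel

lemma Wrec (N m : ℕ) :
    Wsum (N+1) m
      = Finsupp.mapDomain (List.cons false) (Wsum N m)
        + Finsupp.mapDomain (List.cons true) (XW1 N m) := by
  have e0 : Wsum (N+1) m
      = (∑ s ∈ comps N m, xw (encodeWord (1 :: 1 :: s)))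
        + ∑ l ∈ comps N (m+1), xw (encodeWord ((l.headI + 1) :: 1 :: l.tail)) :=
    sum_comps_split N m _
  have e1 : (∑ s ∈ comps N m, xw (encodeWord (1 :: 1 :: s)))
      = ∑ s ∈ comps N m, Finsupp.mapDomain (List.cons true) (xw (encodeWord (1 :: s))) := by
    refine Finset.sum_congr rfl fun s _ => ?_
    rw [encode_cons_one (1 :: s), ← mapDomain_cons_xw]
  have e2 : (∑ l ∈ comps N (m+1), xw (encodeWord ((l.headI + 1) :: 1 :: l.tail)))
      = ∑ l ∈ comps N (m+1),
          Finsupp.mapDomain (List.cons false)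
            (xw (encodeWord (l.headI :: 1 :: l.tail))) := by
    refine Finset.sum_congr rfl fun l hl => ?_
    rw [encode_cons_succ (headI_pos_of_mem_comps hl), ← mapDomain_cons_xw]
  rw [e0, e1, e2]
  simp only [mapDomain_sum_over, Wsum, XW1]
  abel

lemma E_eq (N m : ℕ) : Esum N m = R2sum (N+1) m + Wsum N m := by
  induction N with
  | zero =>
    have h1 : comps 1 (m+2) = ∅ := comps_eq_empty (by omega)
    simp [Esum, R2sum, Wsum, comps_zero_succ, h1]
  | succ N ih =>
    rw [Erec, R2rec, Wrec, ih, H_eq_R]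
    simp only [Finsupp.mapDomain_add]
    abel

/-! ### bridge: abstract shuffle equals concrete shuffle -/

lemma sh_eq_shf (sh : XWords →ₗ[ℤ] XWords →ₗ[ℤ] XWords)
    (hsunitl : ∀ w : XWords, sh (xw []) w = w)
    (hsunitr : ∀ w : XWords, sh w (xw []) = w)
    (hsrec : ∀ (a b : Bool) (u v : List Bool),
      sh (xw (a :: u)) (xw (b :: v)) =
        Finsupp.mapDomain (List.cons a) (sh (xw u) (xw (b :: v))) +
          Finsupp.mapDomain (List.cons b) (sh (xw (a :: u)) (xw v)))
    (u v : List Bool) : sh (xw u) (xw v) = shf u v := by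
  induction u generalizing v with
  | nil => rw [hsunitl, shf_nil_left]
  | cons a u ihu =>
    induction v with
    | nil => rw [hsunitr, shf_nil_right]
    | cons b v ihv => rw [hsrec, ihu, ihv, shf_cons_cons]

/-! ### injectivity of encodeWord on positive lists -/

lemma replicate_true_aux :
    ∀ (i j : ℕ) (x y : List Bool),
      List.replicate i false ++ true :: x = List.replicate j false ++ true :: y →
        i = j ∧ x = y := by
  intro i
  induction i with
  | zero =>
    intro j x y h
    cases j with
    | zero => simpa using h
    | succ j => simp [List.replicate_succ] at h
  | succ i ih =>
    intro j x y h
    cases j with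
    | zero => simp [List.replicate_succ] at h
    | succ j =>
      simp only [List.replicate_succ, List.cons_append, List.cons.injEq, true_and] at h
      obtain ⟨h1, h2⟩ := ih j x y h
      exact ⟨by omega, h2⟩

lemma encode_injOn :
    ∀ {u v : List ℕ}, (∀ x ∈ u, 1 ≤ x) → (∀ x ∈ v, 1 ≤ x) →
      encodeWord u = encodeWord v → u = v := by
  intro u
  induction u with
  | nil =>
    intro v _ _ h
    cases v with
    | nil => rfl
    | cons b t => simp [encodeWord] at h
  | cons a s ih =>
    intro v hu hv h
    cases v with
    | nil => simp [encodeWord] at h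
    | cons b t =>
      simp only [encodeWord] at h
      obtain ⟨h1, h2⟩ := replicate_true_aux _ _ _ _ h
      have ha : 1 ≤ a := hu a (by simp)
      have hb : 1 ≤ b := hv b (by simp)
      have hab : a = b := by omega
      have : s = t := ih (fun x hx => hu x (by simp [hx])) (fun x hx => hv x (by simp [hx])) h2
      rw [hab, this]

lemma eq_zero_of_mapDomain_encode (D : QWords)
    (hs : ∀ l ∈ D.support, ∀ x ∈ l, 1 ≤ x)
    (h : Finsupp.mapDomain encodeWord D = 0) : D = 0 := by
  ext l
  by_cases hl : l ∈ D.support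
  · have hS : ↑D.support ⊆ {l : List ℕ | ∀ x ∈ l, 1 ≤ x} := fun x hx => hs x hx
    have hinj : Set.InjOn encodeWord {l : List ℕ | ∀ x ∈ l, 1 ≤ x} :=
      fun x hx y hy hxy => encode_injOn hx hy hxy
    have := Finsupp.mapDomain_apply' {l : List ℕ | ∀ x ∈ l, 1 ≤ x} D hS hinj (hs l hl)
    rw [h] at this
    simpa using this.symm
  · simpa using Finsupp.notMem_support_iff.1 hl

/-! ### Composition sums as list sums -/

lemma sum_composition_eq {n k : ℕ} {M : Type*} [AddCommMonoid M]
    (P : List ℕ → Prop) [DecidablePred P] (f : List ℕ → M) :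
    ∑ c ∈ Finset.univ.filter (fun c : Composition n => c.length = k ∧ P c.blocks), f c.blocks
      = ∑ l ∈ (comps n k).filter P, f l := by
  refine Finset.sum_bij (fun c _ => c.blocks) ?_ ?_ ?_ (fun a ha => rfl)
  · intro c hc
    simp only [Finset.mem_filter, Finset.mem_univ, true_and] at hc
    rw [Finset.mem_filter, mem_comps]
    exact ⟨⟨hc.1, c.blocks_sum, fun x hx => c.blocks_pos hx⟩, hc.2⟩
  · intro c₁ _ c₂ _ h
    exact Composition.ext h
  · intro l hl
    rw [Finset.mem_filter, mem_comps] at hl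
    obtain ⟨⟨h1, h2, h3⟩, h4⟩ := hl
    refine ⟨⟨l, fun hx => h3 _ hx, h2⟩, ?_, rfl⟩
    simp only [Finset.mem_filter, Finset.mem_univ, true_and]
    exact ⟨h1, h4⟩

lemma sum_composition_eq' {n k : ℕ} {M : Type*} [AddCommMonoid M] (f : List ℕ → M) :
    ∑ c ∈ Finset.univ.filter (fun c : Composition n => c.length = k), f c.blocks
      = ∑ l ∈ comps n k, f l := by
  have := sum_composition_eq (n := n) (k := k) (fun _ => True) f
  simpa using this

lemma headI_mem_self {l : List ℕ} (h : l ≠ []) : l.headI ∈ l := by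
  cases l with
  | nil => simp at h
  | cons a t => simp

lemma mapDomain_sub' {α β : Type*} (f : α → β) (x y : α →₀ ℤ) :
    Finsupp.mapDomain f (x - y) = Finsupp.mapDomain f x - Finsupp.mapDomain f y :=
  map_sub (Finsupp.mapDomain.addMonoidHom f) x y


set_option maxHeartbeats 1000000 in
/-- Admissible sum formula for the transported shuffle product:
for `k ≥ 2`, `n ≥ k+1`,
`∑_{r≥1, s₁≥2, r+s₁+⋯+s_{k-1}=n} z_r ш z_{s₁,…,s_{k-1}}
  = ∑_{∑tᵢ=n} [C(t₁,…,t_{k-1}) − C(t₂,…,t_{k-1})] z_{t₁,…,t_k}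
    − ∑_{∑tᵢ=n, t₂=1} z_{t₁,…,t_k}`, with `C(∅)=1` when `k = 2`. -/
theorem shuffle_sum_formula_admissible
    (sh : XWords →ₗ[ℤ] XWords →ₗ[ℤ] XWords)
    (hsunitl : ∀ w : XWords, sh (xw []) w = w)
    (hsunitr : ∀ w : XWords, sh w (xw []) = w)
    (hsrec : ∀ (a b : Bool) (u v : List Bool),
      sh (xw (a :: u)) (xw (b :: v)) =
        Finsupp.mapDomain (List.cons a) (sh (xw u) (xw (b :: v))) +
          Finsupp.mapDomain (List.cons b) (sh (xw (a :: u)) (xw v)))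
    (msh : QWords →ₗ[ℤ] QWords →ₗ[ℤ] QWords)
    (hsupp : ∀ u v : List ℕ, (∀ x ∈ u, 1 ≤ x) → (∀ x ∈ v, 1 ≤ x) →
      ∀ l ∈ (msh (zw u) (zw v)).support, ∀ x ∈ l, 1 ≤ x)
    (hcompat : ∀ u v : List ℕ, (∀ x ∈ u, 1 ≤ x) → (∀ x ∈ v, 1 ≤ x) →
      Finsupp.mapDomain encodeWord (msh (zw u) (zw v)) =
        sh (xw (encodeWord u)) (xw (encodeWord v)))
    (k n : ℕ) (hk : 2 ≤ k) (hn : k + 1 ≤ n) :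
    ∑ c ∈ Finset.univ.filter
        (fun c : Composition n => c.length = k ∧ 2 ≤ c.blocks.tail.headI),
        msh (zw [c.blocks.headI]) (zw c.blocks.tail)
      = (∑ c ∈ Finset.univ.filter (fun c : Composition n => c.length = k),
          (Ccoef (c.blocks.take (k - 1)) - Ccoef (c.blocks.tail.take (k - 2)))
            • zw c.blocks)
        - ∑ c ∈ Finset.univ.filter
            (fun c : Composition n => c.length = k ∧ c.blocks.tail.headI = 1),
            zw c.blocks := by
  obtain ⟨m, rfl⟩ : ∃ m, k = m + 2 := ⟨k - 2, by omega⟩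
  obtain ⟨N, rfl⟩ : ∃ N, n = N + 1 := ⟨n - 1, by omega⟩
  simp only [show m + 2 - 1 = m + 1 from rfl, show m + 2 - 2 = m from rfl]
  rw [← sub_eq_zero]
  refine eq_zero_of_mapDomain_encode _ ?_ ?_
  · -- support consists of positive lists
    intro l hl x hx
    rcases Finset.mem_union.1 (Finsupp.support_sub hl) with h | h
    · rcases Finset.mem_biUnion.1 (Finsupp.support_finset_sum h) with ⟨c, hc, hlc⟩
      simp only [Finset.mem_filter, Finset.mem_univ, true_and] at hc
      have hblocks : c.blocks ≠ [] := by
        have hlen : c.blocks.length = m + 2 := hc.1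
        intro hb; rw [hb] at hlen; simp at hlen
      refine hsupp [c.blocks.headI] c.blocks.tail ?_ ?_ l hlc x hx
      · intro y hy
        simp only [List.mem_singleton] at hy
        subst hy
        exact c.blocks_pos (headI_mem_self hblocks)
      · intro y hy
        exact c.blocks_pos (List.tail_subset _ hy)
    · rcases Finset.mem_union.1 (Finsupp.support_sub h) with h2 | h2
      · rcases Finset.mem_biUnion.1 (Finsupp.support_finset_sum h2) with ⟨c, hc, hlc⟩
        have hl2 : l ∈ (zw c.blocks).support := Finsupp.support_smul hlc
        have hlb : l = c.blocks := by simpa using Finsupp.support_single_subset hl2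
        subst hlb
        exact c.blocks_pos hx
      · rcases Finset.mem_biUnion.1 (Finsupp.support_finset_sum h2) with ⟨c, hc, hlc⟩
        have hlb : l = c.blocks := by simpa using Finsupp.support_single_subset hlc
        subst hlb
        exact c.blocks_pos hx
  · -- the image under encodeWord vanishes
    rw [mapDomain_sub', mapDomain_sub']
    have pieceL : Finsupp.mapDomain encodeWord
        (∑ c ∈ Finset.univ.filter
            (fun c : Composition (N+1) => c.length = m + 2 ∧ 2 ≤ c.blocks.tail.headI),
          msh (zw [c.blocks.headI]) (zw c.blocks.tail))
        = Hsum (N+1) (m+1) - Esum N m := by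
      calc Finsupp.mapDomain encodeWord (∑ c ∈ Finset.univ.filter
              (fun c : Composition (N+1) => c.length = m + 2 ∧ 2 ≤ c.blocks.tail.headI),
            msh (zw [c.blocks.headI]) (zw c.blocks.tail))
          = ∑ c ∈ Finset.univ.filter
              (fun c : Composition (N+1) => c.length = m + 2 ∧ 2 ≤ c.blocks.tail.headI),
              Finsupp.mapDomain encodeWord (msh (zw [c.blocks.headI]) (zw c.blocks.tail)) :=
            mapDomain_sum_over _ _ _
        _ = ∑ c ∈ Finset.univ.filter
              (fun c : Composition (N+1) => c.length = m + 2 ∧ 2 ≤ c.blocks.tail.headI),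
              shf (encodeWord [c.blocks.headI]) (encodeWord c.blocks.tail) := by
            refine Finset.sum_congr rfl fun c hc => ?_
            simp only [Finset.mem_filter, Finset.mem_univ, true_and] at hc
            have hblocks : c.blocks ≠ [] := by
              have hlen : c.blocks.length = m + 2 := hc.1
              intro hb; rw [hb] at hlen; simp at hlen
            have hu : ∀ x ∈ [c.blocks.headI], 1 ≤ x := by
              intro y hy
              simp only [List.mem_singleton] at hy
              subst hy
              exact c.blocks_pos (headI_mem_self hblocks)
            have hv : ∀ x ∈ c.blocks.tail, 1 ≤ x := fun y hy =>
              c.blocks_pos (List.tail_subset _ hy)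
            rw [hcompat _ _ hu hv, sh_eq_shf sh hsunitl hsunitr hsrec]
        _ = ∑ l ∈ (comps (N+1) (m+2)).filter (fun l => 2 ≤ l.tail.headI),
              shf (encodeWord [l.headI]) (encodeWord l.tail) :=
            sum_composition_eq (fun l => 2 ≤ l.tail.headI)
              (fun l => shf (encodeWord [l.headI]) (encodeWord l.tail))
        _ = ∑ l ∈ (comps (N+1) (m+2)).filter (fun l => ¬ l.tail.headI = 1),
              shf (encodeWord [l.headI]) (encodeWord l.tail) := by
            refine Finset.sum_congr (Finset.filter_congr fun l hl => ?_) fun _ _ => rfl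
            have := tail_headI_pos_of_mem_comps hl
            omega
        _ = Hsum (N+1) (m+1) - Esum N m := by
            have hE : (∑ l ∈ (comps (N+1) (m+2)).filter (fun l => l.tail.headI = 1),
                shf (encodeWord [l.headI]) (encodeWord l.tail)) = Esum N m :=
              sum_comps_filter_tail_one N m _
            have hful : (∑ l ∈ comps (N+1) (m+2),
                shf (encodeWord [l.headI]) (encodeWord l.tail)) = Hsum (N+1) (m+1) := rfl
            rw [← hful, ← hE, eq_sub_iff_add_eq, add_comm]
            exact Finset.sum_filter_add_sum_filter_not _ _ _
    have pieceR1 : Finsupp.mapDomain encodeWord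
        (∑ c ∈ Finset.univ.filter (fun c : Composition (N+1) => c.length = m + 2),
          (Ccoef (c.blocks.take (m + 1)) - Ccoef (c.blocks.tail.take m)) • zw c.blocks)
        = Rsum (N+1) (m+1) - R2sum (N+1) m := by
      calc Finsupp.mapDomain encodeWord (∑ c ∈ Finset.univ.filter
              (fun c : Composition (N+1) => c.length = m + 2),
            (Ccoef (c.blocks.take (m + 1)) - Ccoef (c.blocks.tail.take m)) • zw c.blocks)
          = ∑ c ∈ Finset.univ.filter (fun c : Composition (N+1) => c.length = m + 2),
              (Ccoef (c.blocks.take (m + 1)) - Ccoef (c.blocks.tail.take m))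
                • xw (encodeWord c.blocks) := by
            rw [mapDomain_sum_over]
            exact Finset.sum_congr rfl fun c _ => by
              rw [mapDomain_zsmul, mapDomain_encode_zw]
        _ = ∑ l ∈ comps (N+1) (m+2),
              (Ccoef (l.take (m + 1)) - Ccoef (l.tail.take m)) • xw (encodeWord l) :=
            sum_composition_eq'
              (fun l => (Ccoef (l.take (m + 1)) - Ccoef (l.tail.take m)) • xw (encodeWord l))
        _ = Rsum (N+1) (m+1) - R2sum (N+1) m := by
            simp only [sub_smul, Finset.sum_sub_distrib]
            rfl
    have pieceR2 : Finsupp.mapDomain encodeWord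
        (∑ c ∈ Finset.univ.filter
            (fun c : Composition (N+1) => c.length = m + 2 ∧ c.blocks.tail.headI = 1),
          zw c.blocks)
        = Wsum N m := by
      calc Finsupp.mapDomain encodeWord (∑ c ∈ Finset.univ.filter
              (fun c : Composition (N+1) => c.length = m + 2 ∧ c.blocks.tail.headI = 1),
            zw c.blocks)
          = ∑ c ∈ Finset.univ.filter
              (fun c : Composition (N+1) => c.length = m + 2 ∧ c.blocks.tail.headI = 1),
              xw (encodeWord c.blocks) := by
            rw [mapDomain_sum_over]
            exact Finset.sum_congr rfl fun c _ => mapDomain_encode_zw _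
        _ = ∑ l ∈ (comps (N+1) (m+2)).filter (fun l => l.tail.headI = 1),
              xw (encodeWord l) :=
            sum_composition_eq (fun l => l.tail.headI = 1) (fun l => xw (encodeWord l))
        _ = Wsum N m := sum_comps_filter_tail_one N m _
    rw [pieceL, pieceR1, pieceR2, H_eq_R, E_eq]
    abel
end

section
/- In the shuffle algebra on letters x0, x1, for integers r, s ≥ 1 with r + s = n (Euler's decomposition): (x0^{r-1} x1) ⧢ (x0^{s-1} x1) = ∑_{t1, t2 ≥ 1, t1 + t2 = n} [C(t1-1, r-1) + C(t1-1, s-1)] · x0^{t1-1} x1 x0^{t2-1} x1, where C(a,b) is the binomial coefficient. -/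
open Finsupp

lemma mapDomain_xw (f : List Bool → List Bool) (l : List Bool) :
    Finsupp.mapDomain f (xw l) = xw (f l) := by
  simp [xw, Finsupp.mapDomain_single]

lemma mapDomain_sum_smul (f : List Bool → List Bool) (s : Finset ℕ) (c : ℕ → ℤ)
    (g : ℕ → List Bool) :
    Finsupp.mapDomain f (∑ i ∈ s, c i • xw (g i)) = ∑ i ∈ s, c i • xw (f (g i)) := by
  rw [← Finsupp.lmapDomain_apply ℤ ℤ f, map_sum]
  simp only [map_smul, Finsupp.lmapDomain_apply, xw, Finsupp.mapDomain_single]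

lemma euler_key (sh : XWords →ₗ[ℤ] XWords →ₗ[ℤ] XWords)
    (hsunitl : ∀ w : XWords, sh (xw []) w = w)
    (hsunitr : ∀ w : XWords, sh w (xw []) = w)
    (hsrec : ∀ (a b : Bool) (u v : List Bool),
      sh (xw (a :: u)) (xw (b :: v)) =
        Finsupp.mapDomain (List.cons a) (sh (xw u) (xw (b :: v))) +
          Finsupp.mapDomain (List.cons b) (sh (xw (a :: u)) (xw v)))
    (a b : ℕ) :
    sh (xw (List.replicate a false ++ [true])) (xw (List.replicate b false ++ [true]))
      = ∑ i ∈ Finset.range (a + b + 1), ((i.choose a + i.choose b : ℤ)) •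
          xw (List.replicate i false ++ true ::
            (List.replicate (a + b - i) false ++ [true])) := by
  induction a generalizing b with
  | zero =>
    induction b with
    | zero =>
      show sh (xw ([true])) (xw ([true])) = _
      rw [hsrec true true [] [], hsunitl, hsunitr, mapDomain_xw]
      simp [two_smul]
    | succ b ihb =>
      simp only [List.replicate_zero, List.nil_append, Nat.zero_add] at ihb ⊢
      rw [show List.replicate (b+1) false ++ [true]
          = false :: (List.replicate b false ++ [true]) from by
            simp [List.replicate_succ]]
      rw [hsrec true false [] _, hsunitl, mapDomain_xw, ihb, mapDomain_sum_smul,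
        Finset.sum_range_succ' _ (b + 1), add_comm]
      congr 1
      · apply Finset.sum_congr rfl
        intro i hi
        simp only [Finset.mem_range] at hi
        have h3 : ((i+1).choose 0 : ℤ) + ((i+1).choose (b+1) : ℤ)
            = (i.choose 0 : ℤ) + (i.choose b : ℤ) := by
          rw [Nat.choose_succ_succ i b, Nat.choose_eq_zero_of_lt (show i < b + 1 by omega),
            Nat.choose_zero_right, Nat.choose_zero_right]
          push_cast; ring
        rw [show b + 1 - (i + 1) = b - i from by omega, h3]
        congr 2
      · simp [List.replicate_succ]
  | succ a iha =>
    induction b with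
    | zero =>
      simp only [List.replicate_zero, List.nil_append, Nat.add_zero]
      rw [show List.replicate (a+1) false ++ [true]
          = false :: (List.replicate a false ++ [true]) from by
            simp [List.replicate_succ]]
      rw [hsrec false true _ [], hsunitr, mapDomain_xw]
      have iha0 := iha 0
      simp only [List.replicate_zero, List.nil_append, Nat.add_zero] at iha0
      rw [iha0, mapDomain_sum_smul, Finset.sum_range_succ' _ (a + 1)]
      congr 1
      · apply Finset.sum_congr rfl
        intro i hi
        simp only [Finset.mem_range] at hi
        have h3 : ((i+1).choose (a+1) : ℤ) + ((i+1).choose 0 : ℤ)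
            = (i.choose a : ℤ) + (i.choose 0 : ℤ) := by
          rw [Nat.choose_succ_succ i a, Nat.choose_eq_zero_of_lt (show i < a + 1 by omega),
            Nat.choose_zero_right, Nat.choose_zero_right]
          push_cast; ring
        rw [show a + 1 - (i + 1) = a - i from by omega, h3]
        congr 2
      · simp [List.replicate_succ]
    | succ b ihb =>
      rw [show List.replicate (a+1) false ++ [true]
          = false :: (List.replicate a false ++ [true]) from by
            simp [List.replicate_succ]]
      rw [show List.replicate (b+1) false ++ [true]
          = false :: (List.replicate b false ++ [true]) from by
            simp [List.replicate_succ]]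
      rw [hsrec false false _ _]
      rw [show (false :: (List.replicate b false ++ [true]))
          = List.replicate (b+1) false ++ [true] from by simp [List.replicate_succ]]
      rw [show (false :: (List.replicate a false ++ [true]))
          = List.replicate (a+1) false ++ [true] from by simp [List.replicate_succ]]
      rw [iha (b+1), ihb, mapDomain_sum_smul, mapDomain_sum_smul]
      rw [show a + (b+1) + 1 = a + b + 2 from by ring,
          show a + 1 + b + 1 = a + b + 2 from by ring,
          ← Finset.sum_add_distrib]
      rw [show a + 1 + (b+1) + 1 = (a + b + 2) + 1 from by ring,
        Finset.sum_range_succ' _ (a + b + 2)]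
      rw [show ((0:ℕ).choose (a+1) : ℤ) + ((0:ℕ).choose (b+1) : ℤ) = 0 from by
        simp [Nat.choose_eq_zero_of_lt], zero_smul, add_zero]
      apply Finset.sum_congr rfl
      intro i hi
      simp only [Finset.mem_range] at hi
      have h3 : ((i+1).choose (a+1) : ℤ) + ((i+1).choose (b+1) : ℤ)
          = ((i.choose a : ℤ) + (i.choose (b+1) : ℤ))
            + ((i.choose (a+1) : ℤ) + (i.choose b : ℤ)) := by
        rw [Nat.choose_succ_succ i a, Nat.choose_succ_succ i b]
        push_cast; ring
      rw [show a + 1 + (b+1) - (i+1) = a + b + 1 - i from by omega,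
        show a + (b+1) - i = a + b + 1 - i from by omega,
        show a + 1 + b - i = a + b + 1 - i from by omega,
        h3, ← add_smul]
      congr 2

/-- Euler's decomposition in the shuffle algebra: for `r, s ≥ 1`
with `r + s = n`,
`(x₀^{r-1} x₁) ⧢ (x₀^{s-1} x₁)
  = ∑_{t₁+t₂=n, t₁,t₂≥1} [C(t₁-1, r-1) + C(t₁-1, s-1)] x₀^{t₁-1} x₁ x₀^{t₂-1} x₁`. -/
theorem euler_decomposition
    (sh : XWords →ₗ[ℤ] XWords →ₗ[ℤ] XWords)
    (hsunitl : ∀ w : XWords, sh (xw []) w = w)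
    (hsunitr : ∀ w : XWords, sh w (xw []) = w)
    (hsrec : ∀ (a b : Bool) (u v : List Bool),
      sh (xw (a :: u)) (xw (b :: v)) =
        Finsupp.mapDomain (List.cons a) (sh (xw u) (xw (b :: v))) +
          Finsupp.mapDomain (List.cons b) (sh (xw (a :: u)) (xw v)))
    (r s n : ℕ) (hr : 1 ≤ r) (hs : 1 ≤ s) (hrs : r + s = n) :
    sh (xw (List.replicate (r - 1) false ++ [true]))
        (xw (List.replicate (s - 1) false ++ [true]))
      = ∑ p ∈ (Finset.HasAntidiagonal.antidiagonal n).filter (fun p => 1 ≤ p.1 ∧ 1 ≤ p.2),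
          ((Nat.choose (p.1 - 1) (r - 1) + Nat.choose (p.1 - 1) (s - 1) : ℤ)) •
            xw (List.replicate (p.1 - 1) false ++ true ::
              (List.replicate (p.2 - 1) false ++ [true])) := by
  rw [euler_key sh hsunitl hsunitr hsrec (r-1) (s-1)]
  apply Finset.sum_nbij' (i := fun i => (i + 1, n - (i + 1))) (j := fun p => p.1 - 1)
  · intro i hi
    simp only [Finset.mem_range] at hi
    simp only [Finset.mem_filter, Finset.HasAntidiagonal.mem_antidiagonal]
    omega
  · intro p hp
    simp only [Finset.mem_filter, Finset.HasAntidiagonal.mem_antidiagonal] at hp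
    simp only [Finset.mem_range]
    omega
  · intro i _
    simp
  · intro p hp
    simp only [Finset.mem_filter, Finset.HasAntidiagonal.mem_antidiagonal] at hp
    have : p.1 - 1 + 1 = p.1 := by omega
    rw [this]
    have : n - p.1 = p.2 := by omega
    rw [this]
  · intro i hi
    simp only [Finset.mem_range] at hi
    have e1 : i + 1 - 1 = i := by omega
    have e2 : n - (i + 1) - 1 = r - 1 + (s - 1) - i := by omega
    simp only [e1, e2]
end

section
/- In the shuffle algebra (via Euler's decomposition formula), for n ≥ 3: ∑_{r ≥ 1, s ≥ 2, r + s = n} z_r ш z_s = ∑_{t1=1}^{n-1} (2^{t1} − 1) z_{t1, n−t1} − z_{n−1, 1}, where ш is the transported shuffle product and z_{a,b} corresponds to x0^{a-1} x1 x0^{b-1} x1. -/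
open Finsupp

def decodeWord : List Bool → List ℕ
  | [] => []
  | true :: w => 1 :: decodeWord w
  | false :: w => match decodeWord w with
    | [] => []
    | a :: t => (a + 1) :: t

lemma decode_replicate (k : ℕ) (w : List Bool) :
    decodeWord (List.replicate k false ++ true :: w) = (k + 1) :: decodeWord w := by
  induction k with
  | zero => rfl
  | succ k ih => simp [List.replicate_succ, decodeWord, ih]

lemma decode_encode (l : List ℕ) (hl : ∀ x ∈ l, 1 ≤ x) :
    decodeWord (encodeWord l) = l := by
  induction l with
  | nil => rfl
  | cons s t ih =>
    have hs : 1 ≤ s := hl s (by simp)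
    rw [encodeWord, decode_replicate, ih (fun x hx => hl x (by simp [hx])),
      Nat.sub_add_cancel hs]

lemma mapDomain_encode_cancel (f : QWords) (hf : ∀ l ∈ f.support, ∀ x ∈ l, 1 ≤ x) :
    Finsupp.mapDomain decodeWord (Finsupp.mapDomain encodeWord f) = f := by
  rw [← Finsupp.mapDomain_comp]
  have h : Finsupp.mapDomain (decodeWord ∘ encodeWord) f = Finsupp.mapDomain id f :=
    Finsupp.mapDomain_congr (fun l hl => decode_encode l (hf l hl))
  rw [h, Finsupp.mapDomain_id]

lemma mapCons_sum (c : Bool) (N : ℕ) (k : ℕ → ℤ) (w : ℕ → List Bool) :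
    Finsupp.mapDomain (List.cons c) (∑ t ∈ Finset.range N, k t • xw (w t)) =
      ∑ t ∈ Finset.range N, k t • xw (c :: w t) := by
  rw [Finsupp.mapDomain_finset_sum]
  exact Finset.sum_congr rfl fun t _ => by
    rw [Finsupp.mapDomain_smul, xw, xw, Finsupp.mapDomain_single]

lemma shuffle_pow (sh : XWords →ₗ[ℤ] XWords →ₗ[ℤ] XWords)
    (hsunitl : ∀ w : XWords, sh (xw []) w = w)
    (hsunitr : ∀ w : XWords, sh w (xw []) = w)
    (hsrec : ∀ (a b : Bool) (u v : List Bool),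
      sh (xw (a :: u)) (xw (b :: v)) =
        Finsupp.mapDomain (List.cons a) (sh (xw u) (xw (b :: v))) +
          Finsupp.mapDomain (List.cons b) (sh (xw (a :: u)) (xw v))) :
    ∀ a b : ℕ,
      sh (xw (List.replicate a false ++ [true])) (xw (List.replicate b false ++ [true]))
        = ∑ t ∈ Finset.range (a + b + 1),
            ((t.choose a + t.choose b : ℕ) : ℤ) •
              xw (List.replicate t false ++ true :: List.replicate (a + b - t) false ++ [true]) := by
  intro a
  induction a with
  | zero =>
    intro b
    induction b with
    | zero =>
      simp only [List.replicate_zero, List.nil_append, Nat.zero_add]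
      rw [hsrec, hsunitl, hsunitr]
      rw [Finset.range_one, Finset.sum_singleton]
      simp only [Nat.choose_self, Nat.zero_sub, List.replicate_zero, List.nil_append, xw,
        Finsupp.mapDomain_single]
      rw [← Finsupp.single_add]
      norm_num [Finsupp.smul_single]
    | succ b ihb =>
      simp only [List.replicate_zero, List.nil_append, Nat.zero_add] at ihb ⊢
      rw [show List.replicate (b+1) false ++ [true]
            = false :: (List.replicate b false ++ [true]) from by simp [List.replicate_succ]]
      rw [hsrec, hsunitl, ihb, mapCons_sum]
      rw [Finset.sum_range_succ' _ (b+1), add_comm]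
      congr 1
      · apply Finset.sum_congr rfl fun t ht => ?_
        simp only [Finset.mem_range] at ht
        have h0 : t.choose (b+1) = 0 := Nat.choose_eq_zero_of_lt ht
        simp [List.replicate_succ, Nat.succ_sub_succ, Nat.choose_succ_succ, h0]
      · simp [xw, Finsupp.mapDomain_single, List.replicate_succ]
  | succ a iha =>
    intro b
    induction b with
    | zero =>
      have iha0 := iha 0
      simp only [List.replicate_zero, List.nil_append, Nat.add_zero] at iha0 ⊢
      rw [show List.replicate (a+1) false ++ [true]
            = false :: (List.replicate a false ++ [true]) from by simp [List.replicate_succ]]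
      rw [hsrec, hsunitr, iha0, mapCons_sum]
      rw [Finset.sum_range_succ' _ (a+1)]
      congr 1
      · apply Finset.sum_congr rfl fun t ht => ?_
        simp only [Finset.mem_range] at ht
        have h0 : t.choose (a+1) = 0 := Nat.choose_eq_zero_of_lt ht
        simp [List.replicate_succ, Nat.succ_sub_succ, Nat.choose_succ_succ, h0]
      · simp [xw, Finsupp.mapDomain_single, List.replicate_succ]
    | succ b ihb =>
      have iha' := iha (b+1)
      simp only [show a+(b+1) = a+1+b from by omega] at iha'
      rw [show List.replicate (a+1) false ++ [true]
            = false :: (List.replicate a false ++ [true]) from by simp [List.replicate_succ]]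
        at ihb ⊢
      rw [show List.replicate (b+1) false ++ [true]
            = false :: (List.replicate b false ++ [true]) from by simp [List.replicate_succ]]
        at iha' ⊢
      rw [hsrec, iha', ihb, mapCons_sum, mapCons_sum]
      rw [Finset.sum_range_succ' _ (a+1+(b+1)), ← Finset.sum_add_distrib]
      have hz : (((0:ℕ).choose (a+1) + (0:ℕ).choose (b+1) : ℕ) : ℤ) •
          xw (List.replicate 0 false ++ true ::
            List.replicate (a+1+(b+1)-0) false ++ [true]) = 0 := by
        simp [Nat.choose_eq_zero_of_lt]
      rw [hz, add_zero]
      apply Finset.sum_congr (by rw [show a+1+b+1 = a+1+(b+1) from by omega]) fun t ht => ?_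
      simp only [Finset.mem_range] at ht
      rw [show a+1+(b+1)-(t+1) = a+1+b-t from by omega]
      simp only [List.replicate_succ, List.cons_append]
      rw [← add_smul]
      congr 1
      push_cast [Nat.choose_succ_succ]
      ring


lemma msh_single (sh : XWords →ₗ[ℤ] XWords →ₗ[ℤ] XWords)
    (hsunitl : ∀ w : XWords, sh (xw []) w = w)
    (hsunitr : ∀ w : XWords, sh w (xw []) = w)
    (hsrec : ∀ (a b : Bool) (u v : List Bool),
      sh (xw (a :: u)) (xw (b :: v)) =
        Finsupp.mapDomain (List.cons a) (sh (xw u) (xw (b :: v))) +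
          Finsupp.mapDomain (List.cons b) (sh (xw (a :: u)) (xw v)))
    (msh : QWords →ₗ[ℤ] QWords →ₗ[ℤ] QWords)
    (hsupp : ∀ u v : List ℕ, (∀ x ∈ u, 1 ≤ x) → (∀ x ∈ v, 1 ≤ x) →
      ∀ l ∈ (msh (zw u) (zw v)).support, ∀ x ∈ l, 1 ≤ x)
    (hcompat : ∀ u v : List ℕ, (∀ x ∈ u, 1 ≤ x) → (∀ x ∈ v, 1 ≤ x) →
      Finsupp.mapDomain encodeWord (msh (zw u) (zw v)) =
        sh (xw (encodeWord u)) (xw (encodeWord v)))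
    (a b : ℕ) :
    msh (zw [a+1]) (zw [b+1]) = ∑ t ∈ Finset.range (a+b+1),
      ((t.choose a + t.choose b : ℕ) : ℤ) • zw [t+1, a+b-t+1] := by
  have hmain := hcompat [a+1] [b+1] (by simp) (by simp)
  have henc : ∀ k : ℕ, encodeWord [k+1] = List.replicate k false ++ [true] := by
    intro k; simp [encodeWord]
  rw [henc, henc, shuffle_pow sh hsunitl hsunitr hsrec a b] at hmain
  have hd : ∀ t m : ℕ, decodeWord
      (List.replicate t false ++ true :: List.replicate m false ++ [true]) = [t+1, m+1] := by
    intro t m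
    rw [List.append_assoc, List.cons_append]
    rw [decode_replicate t (List.replicate m false ++ [true]), decode_replicate m []]
    rfl
  calc msh (zw [a+1]) (zw [b+1])
      = Finsupp.mapDomain decodeWord (Finsupp.mapDomain encodeWord
          (msh (zw [a+1]) (zw [b+1]))) :=
        (mapDomain_encode_cancel _ (hsupp [a+1] [b+1] (by simp) (by simp))).symm
    _ = Finsupp.mapDomain decodeWord (∑ t ∈ Finset.range (a+b+1),
          ((t.choose a + t.choose b : ℕ) : ℤ) •
            xw (List.replicate t false ++ true :: List.replicate (a+b-t) false ++ [true])) := by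
        rw [hmain]
    _ = ∑ t ∈ Finset.range (a+b+1),
          ((t.choose a + t.choose b : ℕ) : ℤ) • zw [t+1, a+b-t+1] := by
        rw [Finsupp.mapDomain_finset_sum]
        refine Finset.sum_congr rfl fun t ht => ?_
        rw [Finsupp.mapDomain_smul, xw, Finsupp.mapDomain_single, hd, zw]


lemma sum_choose_all (t m : ℕ) (hm : t < m) :
    ∑ j ∈ Finset.range m, t.choose j = 2^t := by
  refine (Finset.sum_subset (Finset.range_subset_range.2 hm) fun x _ hnx =>
    Nat.choose_eq_zero_of_lt ?_).symm.trans (Nat.sum_range_choose t)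
  simp only [Finset.mem_range, not_lt] at hnx
  omega

lemma coeff_sum (n t : ℕ) (hn : 3 ≤ n) (ht : t < n - 1) :
    (∑ k ∈ Finset.range (n+1), if 1 ≤ k ∧ 2 ≤ n - k
        then (t.choose (k-1) + t.choose (n-k-1)) else 0)
      + 1 + (if t = n - 2 then 1 else 0) = 2^(t+1) := by
  rw [← Finset.sum_filter]
  have hset : (Finset.range (n+1)).filter (fun k => 1 ≤ k ∧ 2 ≤ n - k)
      = Finset.Icc 1 (n-2) := by
    ext k
    simp only [Finset.mem_filter, Finset.mem_range, Finset.mem_Icc]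
    omega
  rw [hset, Finset.sum_add_distrib]
  have hA : ∑ k ∈ Finset.Icc 1 (n-2), t.choose (k-1)
      = ∑ j ∈ Finset.range (n-2), t.choose j := by
    rw [← Finset.Ico_add_one_right_eq_Icc, Finset.sum_Ico_eq_sum_range,
      show n-2+1-1 = n-2 from by omega]
    exact Finset.sum_congr rfl fun i _ => by congr 1; omega
  have hB : ∑ k ∈ Finset.Icc 1 (n-2), t.choose (n-k-1)
      = ∑ j ∈ Finset.range (n-2), t.choose (j+1) := by
    rw [← Finset.Ico_add_one_right_eq_Icc, Finset.sum_Ico_eq_sum_range,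
      show n-2+1-1 = n-2 from by omega,
      ← Finset.sum_range_reflect (fun j => t.choose (j+1)) (n-2)]
    refine Finset.sum_congr rfl fun i hi => ?_
    simp only [Finset.mem_range] at hi
    congr 1
    omega
  have hB2 : (∑ j ∈ Finset.range (n-2), t.choose (j+1)) + 1
      = ∑ j ∈ Finset.range (n-1), t.choose j := by
    rw [show n-1 = (n-2)+1 from by omega, Finset.sum_range_succ']
    simp
  have h1 : ∑ j ∈ Finset.range (n-1), t.choose j = 2^t :=
    sum_choose_all t (n-1) (by omega)
  have hBt : (∑ j ∈ Finset.range (n-2), t.choose (j+1)) + 1 = 2^t := hB2.trans h1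
  have hpow : 2^(t+1) = 2^t + 2^t := by rw [pow_succ, Nat.mul_two]
  rcases eq_or_ne t (n-2) with heq | hne
  · rw [if_pos heq, hA, hB]
    have hA2 : (∑ j ∈ Finset.range (n-2), t.choose j) + 1 = 2^t := by
      have h3 := Nat.sum_range_choose t
      rw [Finset.sum_range_succ, Nat.choose_self] at h3
      rw [← heq]
      exact h3
    linarith
  · rw [if_neg hne, hA, hB]
    have hA2 : ∑ j ∈ Finset.range (n-2), t.choose j = 2^t :=
      sum_choose_all t (n-2) (by omega)
    linarith


/-- For `n ≥ 3`:
`∑_{r ≥ 1, s ≥ 2, r+s=n} z_r ш z_s = ∑_{t₁=1}^{n-1} (2^{t₁} − 1) z_{t₁, n−t₁} − z_{n−1,1}`. -/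
theorem shuffle_sum_depth_two_admissible
    (sh : XWords →ₗ[ℤ] XWords →ₗ[ℤ] XWords)
    (hsunitl : ∀ w : XWords, sh (xw []) w = w)
    (hsunitr : ∀ w : XWords, sh w (xw []) = w)
    (hsrec : ∀ (a b : Bool) (u v : List Bool),
      sh (xw (a :: u)) (xw (b :: v)) =
        Finsupp.mapDomain (List.cons a) (sh (xw u) (xw (b :: v))) +
          Finsupp.mapDomain (List.cons b) (sh (xw (a :: u)) (xw v)))
    (msh : QWords →ₗ[ℤ] QWords →ₗ[ℤ] QWords)
    (hsupp : ∀ u v : List ℕ, (∀ x ∈ u, 1 ≤ x) → (∀ x ∈ v, 1 ≤ x) →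
      ∀ l ∈ (msh (zw u) (zw v)).support, ∀ x ∈ l, 1 ≤ x)
    (hcompat : ∀ u v : List ℕ, (∀ x ∈ u, 1 ≤ x) → (∀ x ∈ v, 1 ≤ x) →
      Finsupp.mapDomain encodeWord (msh (zw u) (zw v)) =
        sh (xw (encodeWord u)) (xw (encodeWord v)))
    (n : ℕ) (hn : 3 ≤ n) :
    ∑ p ∈ (Finset.HasAntidiagonal.antidiagonal n).filter (fun p => 1 ≤ p.1 ∧ 2 ≤ p.2),
        msh (zw [p.1]) (zw [p.2])
      = (∑ t₁ ∈ Finset.Icc 1 (n - 1), ((2 : ℤ) ^ t₁ - 1) • zw [t₁, n - t₁])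
          - zw [n - 1, 1] := by
  have key : ∀ k ∈ Finset.range (n+1),
      (if 1 ≤ k ∧ 2 ≤ n - k then msh (zw [k]) (zw [n-k]) else 0)
        = ∑ t ∈ Finset.range (n-1),
            (if 1 ≤ k ∧ 2 ≤ n - k
              then ((t.choose (k-1) + t.choose (n-k-1) : ℕ) : ℤ) else 0) •
              zw [t+1, n-2-t+1] := by
    intro k hk
    simp only [Finset.mem_range] at hk
    by_cases h : 1 ≤ k ∧ 2 ≤ n - k
    · rw [if_pos h]
      obtain ⟨h1, h2⟩ := h
      rw [show (zw [k]) = zw [(k-1)+1] from by rw [show (k-1)+1 = k from by omega],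
        show (zw [n-k]) = zw [(n-k-1)+1] from by rw [show (n-k-1)+1 = n-k from by omega]]
      rw [msh_single sh hsunitl hsunitr hsrec msh hsupp hcompat (k-1) (n-k-1)]
      rw [show (k-1) + (n-k-1) = n-2 from by omega]
      exact Finset.sum_congr (by rw [show n-2+1 = n-1 from by omega])
        fun t ht => by rw [if_pos ⟨h1, h2⟩]
    · rw [if_neg h]
      exact (Finset.sum_eq_zero fun t ht => by rw [if_neg h, zero_smul]).symm
  rw [Finset.sum_filter, Finset.Nat.sum_antidiagonal_eq_sum_range_succ_mk,
    Finset.sum_congr rfl key, Finset.sum_comm]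
  have hsm : ∀ t ∈ Finset.range (n-1),
      (∑ k ∈ Finset.range (n+1), (if 1 ≤ k ∧ 2 ≤ n - k
          then ((t.choose (k-1) + t.choose (n-k-1) : ℕ) : ℤ) else 0) • zw [t+1, n-2-t+1])
        = ((2:ℤ)^(t+1) - 1) • zw [t+1, n-2-t+1]
          - (if t = n-2 then (1:ℤ) else 0) • zw [t+1, n-2-t+1] := by
    intro t ht
    simp only [Finset.mem_range] at ht
    rw [← Finset.sum_smul, ← sub_smul]
    congr 1
    have hc := coeff_sum n t hn ht
    have hcast : (∑ k ∈ Finset.range (n+1), if 1 ≤ k ∧ 2 ≤ n - k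
        then ((t.choose (k-1) + t.choose (n-k-1) : ℕ) : ℤ) else 0)
        = ((∑ k ∈ Finset.range (n+1), if 1 ≤ k ∧ 2 ≤ n - k
            then (t.choose (k-1) + t.choose (n-k-1)) else 0 : ℕ) : ℤ) := by
      rw [Nat.cast_sum]
      refine Finset.sum_congr rfl fun k _ => ?_
      rcases Classical.em (1 ≤ k ∧ 2 ≤ n - k) with h | h
      · rw [if_pos h, if_pos h]
      · rw [if_neg h, if_neg h, Nat.cast_zero]
    rcases eq_or_ne t (n-2) with heq | hne
    · rw [if_pos heq] at hc ⊢
      have h2 := congrArg (Nat.cast : ℕ → ℤ) hc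
      rw [hcast]
      push_cast at h2 ⊢
      linarith
    · rw [if_neg hne] at hc ⊢
      have h2 := congrArg (Nat.cast : ℕ → ℤ) hc
      rw [hcast]
      push_cast at h2 ⊢
      linarith
  rw [Finset.sum_congr rfl hsm, Finset.sum_sub_distrib]
  congr 1
  · rw [← Finset.Ico_add_one_right_eq_Icc, Finset.sum_Ico_eq_sum_range,
      show n-1+1-1 = n-1 from by omega]
    refine Finset.sum_congr rfl fun t ht => ?_
    simp only [Finset.mem_range] at ht
    rw [show 1 + t = t + 1 from by omega, show n - (t+1) = n-2-t+1 from by omega]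
  · have hone : ∀ t ∈ Finset.range (n-1),
        (if t = n-2 then (1:ℤ) else 0) • zw [t+1, n-2-t+1]
          = if t = n-2 then zw [n-1, 1] else 0 := by
      intro t ht
      rcases eq_or_ne t (n-2) with heq | hne
      · subst heq
        rw [if_pos rfl, if_pos rfl, one_smul,
          show n-2+1 = n-1 from by omega, show n-2-(n-2)+1 = 1 from by omega]
      · rw [if_neg hne, if_neg hne, zero_smul]
    rw [Finset.sum_congr rfl hone, Finset.sum_ite_eq' (Finset.range (n-1)) (n-2)]
    rw [if_pos (by simp only [Finset.mem_range]; omega)]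
end
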